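/- arXiv:1009.5341 — 4 statements merged into one kernel-verified Lean document; each statement's English description precedes it below -/
import Mathlib

section
/- For any finite directed acyclic graph G, the transitive reduction of G (the subgraph obtained by deleting all superfluous edges) has the same transitive closure as G. -/
/-- An edge `(u,v)` of a DAG `E` is superfluous if it is an edge and deleting it
leaves the transitive closure unchanged. -/
def Superfluous {V : Type*} (E : V → V → Prop) (u v : V) : Prop :=
  E u v ∧ ∀ a b, Relation.TransGen E a b ↔
    Relation.TransGen (fun a b => E a b ∧ ¬ (a = u ∧ b = v)) a b

/-- The transitive reduction of a finite simple DAG (deleting all superfluous edges)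
has the same transitive closure as the DAG itself. -/
theorem stmt2 {V : Type*} [Fintype V] (E : V → V → Prop)
    (hacyc : ∀ v, ¬ Relation.TransGen E v v) :
    ∀ a b, Relation.TransGen (fun a b => E a b ∧ ¬ Superfluous E a b) a b ↔
      Relation.TransGen E a b := by
  classical
  set E' : V → V → Prop := fun a b => E a b ∧ ¬ Superfluous E a b with hE'def
  set m : V → V → ℕ := fun u v =>
    (Finset.univ.filter
      (fun z => Relation.TransGen E u z ∧ Relation.TransGen E z v)).card with hmdef
  have key : ∀ n, ∀ u v, m u v < n → E u v → Relation.TransGen E' u v := by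
    intro n
    induction n with
    | zero => intro u v h; omega
    | succ n ih =>
      intro u v hm huv
      by_cases hs : Superfluous E u v
      · set D : V → V → Prop := fun a b => E a b ∧ ¬ (a = u ∧ b = v) with hDdef
        have hpath : Relation.TransGen D u v := (hs.2 u v).mp (.single huv)
        have hedge : ∀ x y, D x y → Relation.ReflTransGen D u x →
            Relation.ReflTransGen D y v → Relation.TransGen E' x y := by
          intro x y hxy hux hyv
          have hux' : Relation.ReflTransGen E u x := Relation.ReflTransGen.lift id (r := D) (p := E) (fun a b h => h.1) _ _ hux
          have hyv' : Relation.ReflTransGen E y v := Relation.ReflTransGen.lift id (r := D) (p := E) (fun a b h => h.1) _ _ hyv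
          have hsub : (Finset.univ.filter
              (fun z => Relation.TransGen E x z ∧ Relation.TransGen E z y)) ⊆
              (Finset.univ.filter
              (fun z => Relation.TransGen E u z ∧ Relation.TransGen E z v)) := by
            intro z hz
            simp only [Finset.mem_filter, Finset.mem_univ, true_and] at hz ⊢
            exact ⟨Relation.TransGen.trans_right hux' hz.1,
              Relation.TransGen.trans_left hz.2 hyv'⟩
          have hne : x ≠ u ∨ y ≠ v := by
            by_contra hcon
            push_neg at hcon
            exact hxy.2 ⟨hcon.1, hcon.2⟩
          obtain ⟨w, hwin, hwout⟩ : ∃ w, w ∈ (Finset.univ.filter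
              (fun z => Relation.TransGen E u z ∧ Relation.TransGen E z v)) ∧
              w ∉ (Finset.univ.filter
              (fun z => Relation.TransGen E x z ∧ Relation.TransGen E z y)) := by
            rcases hne with hne | hne
            · refine ⟨x, ?_, ?_⟩
              · simp only [Finset.mem_filter, Finset.mem_univ, true_and]
                rcases (Relation.reflTransGen_iff_eq_or_transGen.mp hux') with h | h
                · exact absurd h hne
                · exact ⟨h, Relation.TransGen.trans_left (.single hxy.1) hyv'⟩
              · simp only [Finset.mem_filter, Finset.mem_univ, true_and]
                intro h; exact hacyc x h.1
            · refine ⟨y, ?_, ?_⟩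
              · simp only [Finset.mem_filter, Finset.mem_univ, true_and]
                rcases (Relation.reflTransGen_iff_eq_or_transGen.mp hyv') with h | h
                · exact absurd h.symm hne
                · exact ⟨Relation.TransGen.trans_right hux' (.single hxy.1), h⟩
              · simp only [Finset.mem_filter, Finset.mem_univ, true_and]
                intro h; exact hacyc y h.2
          have hlt : m x y < m u v := by
            apply Finset.card_lt_card
            exact Finset.ssubset_iff_of_subset hsub |>.mpr ⟨w, hwin, hwout⟩
          exact ih x y (by omega) hxy.1
        have walk : ∀ x, Relation.TransGen D x v →
            Relation.ReflTransGen D u x → Relation.TransGen E' x v := by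
          intro x hx
          induction hx using Relation.TransGen.head_induction_on with
          | single h => exact fun hpre => hedge _ _ h hpre .refl
          | head hac hcv ihc =>
            exact fun hpre =>
              (hedge _ _ hac hpre hcv.to_reflTransGen).trans (ihc (hpre.tail hac))
        exact walk u hpath .refl
      · exact .single ⟨huv, hs⟩
  intro a b
  constructor
  · exact fun h => Relation.TransGen.lift id (r := E') (p := E) (fun _ _ h => h.1) _ _ h
  · intro h
    induction h with
    | single h => exact key (m _ _ + 1) _ _ (Nat.lt_succ_self _) h
    | tail h1 h2 ih => exact ih.trans (key (m _ _ + 1) _ _ (Nat.lt_succ_self _) h2)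
end

section
/- Two finite directed acyclic graphs on the same vertex set have the same transitive closure if and only if they have the same transitive reduction. -/
/-- The covering relation of the transitive closure of a DAG: the edge relation of
its transitive reduction. -/
def covRel {V : Type*} (E : V → V → Prop) (u v : V) : Prop :=
  Relation.TransGen E u v ∧ ¬ ∃ w, Relation.TransGen E u w ∧ Relation.TransGen E w v

open Relation in
lemma covRel_key {V : Type*} [Fintype V] (E : V → V → Prop)
    (h : ∀ v, ¬ Relation.TransGen E v v) :
    ∀ a b, Relation.TransGen E a b → Relation.TransGen (covRel E) a b := by
  classical
  have main : ∀ n a b,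
      (Finset.univ.filter (fun x => TransGen E a x ∧ TransGen E x b)).card = n →
      TransGen E a b → TransGen (covRel E) a b := by
    intro n
    induction n using Nat.strong_induction_on with
    | _ n ih =>
      intro a b hcard hab
      by_cases hc : ∃ w, TransGen E a w ∧ TransGen E w b
      · obtain ⟨w, haw, hwb⟩ := hc
        have hss1 : (Finset.univ.filter (fun x => TransGen E a x ∧ TransGen E x w)) ⊂
            (Finset.univ.filter (fun x => TransGen E a x ∧ TransGen E x b)) := by
          constructor
          · intro x hx
            simp only [Finset.mem_filter, Finset.mem_univ, true_and] at hx ⊢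
            exact ⟨hx.1, hx.2.trans hwb⟩
          · intro hsub
            have := hsub (by simp only [Finset.mem_filter, Finset.mem_univ, true_and]
                             exact ⟨haw, hwb⟩ : w ∈ _)
            simp only [Finset.mem_filter, Finset.mem_univ, true_and] at this
            exact h w this.2
        have hss2 : (Finset.univ.filter (fun x => TransGen E w x ∧ TransGen E x b)) ⊂
            (Finset.univ.filter (fun x => TransGen E a x ∧ TransGen E x b)) := by
          constructor
          · intro x hx
            simp only [Finset.mem_filter, Finset.mem_univ, true_and] at hx ⊢
            exact ⟨haw.trans hx.1, hx.2⟩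
          · intro hsub
            have := hsub (by simp only [Finset.mem_filter, Finset.mem_univ, true_and]
                             exact ⟨haw, hwb⟩ : w ∈ _)
            simp only [Finset.mem_filter, Finset.mem_univ, true_and] at this
            exact h w this.1
        have t1 : TransGen (covRel E) a w :=
          ih _ (hcard ▸ Finset.card_lt_card hss1) a w rfl haw
        have t2 : TransGen (covRel E) w b :=
          ih _ (hcard ▸ Finset.card_lt_card hss2) w b rfl hwb
        exact t1.trans t2
      · exact TransGen.single ⟨hab, hc⟩
  intro a b hab
  exact main _ a b rfl hab

/-- Two finite DAGs on the same vertex set have the same transitive closure iff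
they have the same transitive reduction. -/
theorem stmt4 {V : Type*} [Fintype V] (E₁ E₂ : V → V → Prop)
    (h₁ : ∀ v, ¬ Relation.TransGen E₁ v v) (h₂ : ∀ v, ¬ Relation.TransGen E₂ v v) :
    (∀ a b, Relation.TransGen E₁ a b ↔ Relation.TransGen E₂ a b) ↔
      (∀ a b, covRel E₁ a b ↔ covRel E₂ a b) := by
  constructor
  · intro h a b
    unfold covRel
    constructor
    · rintro ⟨hab, hn⟩
      exact ⟨(h a b).1 hab, fun ⟨w, hw1, hw2⟩ => hn ⟨w, (h a w).2 hw1, (h w b).2 hw2⟩⟩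
    · rintro ⟨hab, hn⟩
      exact ⟨(h a b).2 hab, fun ⟨w, hw1, hw2⟩ => hn ⟨w, (h a w).1 hw1, (h w b).1 hw2⟩⟩
  · intro h a b
    have back : ∀ (E E' : V → V → Prop), (∀ v, ¬ Relation.TransGen E v v) →
        (∀ x y, covRel E x y → covRel E' x y) →
        Relation.TransGen E a b → Relation.TransGen E' a b := by
      intro E E' hE hcov hab
      have := Relation.TransGen.mono hcov a b (covRel_key E hE a b hab)
      have := Relation.TransGen.mono (fun x y (hxy : covRel E' x y) => hxy.1) a b this
      exact Relation.transGen_idem (r := E') ▸ this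
    exact ⟨back E₁ E₂ h₁ (fun x y => (h x y).1), back E₂ E₁ h₂ (fun x y => (h x y).2)⟩
end

section
/- Let Σ be a finite alphabet with an irreflexive symmetric independence relation I, and let α ∈ Σ*. Define the dependence DAG dep_I(α) on vertices {1,...,|α|} with an edge from i to j iff i < j and (α_i, α_j) ∉ I. If β is obtained from α by swapping two adjacent letters α_k, α_{k+1} with (α_k, α_{k+1}) ∈ I, then the transitive closures of dep_I(α) and dep_I(β) are isomorphic as labeled partial orders (via the transposition of positions k and k+1). -/
/-- The dependence DAG of a word `α` (of length `n`, given as a function on positions)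
with respect to an independence relation `I`: an edge from position `i` to position `j`
iff `i < j` and the letters are dependent. -/
def depF {A : Type*} (I : A → A → Prop) {n : ℕ} (α : Fin n → A) (i j : Fin n) : Prop :=
  i < j ∧ ¬ I (α i) (α j)

lemma depF_swap_aux {A : Type*} (I : A → A → Prop) {n : ℕ} (α : Fin n → A) (k k' : Fin n)
    (hk : (k' : ℕ) = (k : ℕ) + 1) (hI : I (α k) (α k')) {i j : Fin n}
    (h : depF I α i j) :
    depF I (α ∘ Equiv.swap k k') (Equiv.swap k k' i) (Equiv.swap k k' j) := by
  obtain ⟨hij, hd⟩ := h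
  have hkk' : k ≠ k' := by intro h; rw [h] at hk; omega
  have hlab : ∀ x, (α ∘ Equiv.swap k k') (Equiv.swap k k' x) = α x := by
    intro x; simp
  refine ⟨?_, by rw [hlab, hlab]; exact hd⟩
  rw [Fin.lt_def] at hij ⊢
  by_cases hik : i = k
  · subst hik
    have hjk' : j ≠ k' := by intro h; subst h; exact hd hI
    have hjk : j ≠ i := by intro h; omega
    rw [Equiv.swap_apply_left, Equiv.swap_apply_of_ne_of_ne hjk hjk']
    have := Fin.val_ne_of_ne hjk'
    omega
  · by_cases hik' : i = k'
    · subst hik'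
      have hjk : j ≠ k := by intro h; subst h; omega
      have hji : j ≠ i := by intro h; omega
      rw [Equiv.swap_apply_right, Equiv.swap_apply_of_ne_of_ne hjk hji]
      omega
    · rw [Equiv.swap_apply_of_ne_of_ne hik hik']
      by_cases hjk : j = k
      · subst hjk
        rw [Equiv.swap_apply_left]
        omega
      · by_cases hjk' : j = k'
        · subst hjk'
          rw [Equiv.swap_apply_right]
          have := Fin.val_ne_of_ne hik
          omega
        · rw [Equiv.swap_apply_of_ne_of_ne hjk hjk']
          omega

/-- Swapping two adjacent independent letters of a word yields a word whose induced
labeled partial order (transitive closure of the dependence DAG) is isomorphic to the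
original one, via the transposition of the two positions: the transposition preserves
labels and is an order isomorphism. -/
theorem stmt13 {A : Type*} (I : A → A → Prop)
    (hsymm : ∀ a b, I a b → I b a) (hirr : ∀ a, ¬ I a a)
    {n : ℕ} (α : Fin n → A) (k k' : Fin n) (hk : (k' : ℕ) = (k : ℕ) + 1)
    (hI : I (α k) (α k')) :
    (∀ i, (α ∘ Equiv.swap k k') (Equiv.swap k k' i) = α i) ∧
    (∀ i j, Relation.TransGen (depF I α) i j ↔
      Relation.TransGen (depF I (α ∘ Equiv.swap k k'))
        (Equiv.swap k k' i) (Equiv.swap k k' j)) := by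
  set β := α ∘ Equiv.swap k k' with hβ
  have hβσ : β ∘ Equiv.swap k k' = α := by
    funext x; simp [hβ]
  have hIβ : I (β k) (β k') := by
    simp only [hβ, Function.comp_apply, Equiv.swap_apply_left, Equiv.swap_apply_right]
    exact hsymm _ _ hI
  refine ⟨fun i => by simp [hβ], fun i j => ⟨?_, ?_⟩⟩
  · exact fun h => Relation.TransGen.lift (Equiv.swap k k') (fun a b hab =>
      depF_swap_aux I α k k' hk hI hab) _ _ h
  · intro h
    have := Relation.TransGen.lift (Equiv.swap k k') (fun a b hab =>
      depF_swap_aux I β k k' hk hIβ hab) _ _ h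
    rw [hβσ] at this
    simpa [Function.onFun] using this
end

section
/- Let Σ be a finite alphabet with an irreflexive symmetric independence relation I. For any string α ∈ Σ*, every linearization of the partial order po_I(α) belongs to the trace [α]_I. Consequently, two strings α, β induce the same labeled partial order po_I(α) ≅ po_I(β) if they are related by a sequence of swaps of adjacent independent letters. -/
/-- The dependence DAG of a word `α : List A` with respect to an independence relation
`I`: an edge from position `i` to position `j` iff `i < j` and the letters are
dependent. -/
def depL {A : Type*} (I : A → A → Prop) (α : List A) (i j : Fin α.length) : Prop :=
  i < j ∧ ¬ I (α.get i) (α.get j)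

/-- One step of Mazurkiewicz trace equivalence: swap two adjacent independent letters. -/
def SwapRel {A : Type*} (I : A → A → Prop) (α β : List A) : Prop :=
  ∃ u a b w, I a b ∧ α = u ++ a :: b :: w ∧ β = u ++ b :: a :: w



lemma ofFn_decomp {A : Type*} {n : ℕ} (g : Fin n → A) (t : ℕ) (ht : t + 1 < n) :
    List.ofFn g = List.ofFn (fun i : Fin t => g ⟨i, by omega⟩) ++
      g ⟨t, by omega⟩ :: g ⟨t+1, ht⟩ ::
      List.ofFn (fun i : Fin (n-(t+2)) => g ⟨t+2+i, by omega⟩) := by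
  apply List.ext_getElem
  · simp; omega
  · intro i h1 h2
    simp only [List.getElem_ofFn]
    rcases lt_trichotomy i t with h | rfl | h
    · rw [List.getElem_append_left (by simpa using h)]
      simp
    · rw [List.getElem_append_right (by simp)]
      simp
    · rw [List.getElem_append_right (by simp; omega)]
      rcases Nat.eq_or_lt_of_le h with h' | h'
      · have h2 : i - t = 1 := by omega
        simp only [List.length_ofFn, h2, List.getElem_cons_succ, List.getElem_cons_zero]
        exact congrArg g (Fin.ext (by simp; omega))
      · obtain ⟨k, hk⟩ : ∃ k, i - t = k + 2 := ⟨i - t - 2, by omega⟩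
        simp only [List.length_ofFn, hk, List.getElem_cons_succ, List.getElem_ofFn]
        exact congrArg g (Fin.ext (by simp; omega))

lemma swapRel_ofFn {A : Type*} {I : A → A → Prop} {n : ℕ} (f : Fin n → A) (t : ℕ)
    (ht : t + 1 < n)
    (hI : I (f ⟨t+1, ht⟩) (f ⟨t, by omega⟩)) :
    SwapRel I (List.ofFn (f ∘ Equiv.swap ⟨t, by omega⟩ ⟨t+1, ht⟩)) (List.ofFn f) := by
  refine ⟨List.ofFn (fun i : Fin t => f ⟨i, by omega⟩), f ⟨t+1, ht⟩, f ⟨t, by omega⟩,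
    List.ofFn (fun i : Fin (n - (t+2)) => f ⟨t+2+i, by omega⟩), hI, ?_, ?_⟩
  · rw [ofFn_decomp (f ∘ Equiv.swap ⟨t, by omega⟩ ⟨t+1, ht⟩) t ht]
    congr 1
    · congr 1
      funext i
      simp only [Function.comp_apply]
      rw [Equiv.swap_apply_of_ne_of_ne (by simp [Fin.ext_iff]; omega) (by simp [Fin.ext_iff]; omega)]
    · congr 1
      · simp [Equiv.swap_apply_left]
      congr 1
      · simp [Equiv.swap_apply_right]
      congr 1
      funext i
      simp only [Function.comp_apply]
      rw [Equiv.swap_apply_of_ne_of_ne (by simp [Fin.ext_iff]; omega) (by simp [Fin.ext_iff]; omega)]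
  · exact ofFn_decomp f t ht

open Relation

lemma no_descent_id {A : Type*} (α : List A) (σ : Fin α.length ≃ Fin α.length)
    (hd : ∀ (t : ℕ) (ht : t + 1 < α.length), σ ⟨t, by omega⟩ < σ ⟨t+1, ht⟩) :
    (List.ofFn fun i => α.get (σ i)) = α := by
  have mono : ∀ (d k : ℕ) (hk : k + d + 1 < α.length),
      σ ⟨k, by omega⟩ < σ ⟨k + d + 1, hk⟩ := by
    intro d
    induction d with
    | zero => intro k hk; exact hd k hk
    | succ d ihd =>
      intro k hk
      have h1 : k + d + 1 < α.length := by omega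
      have e : (⟨k + (d+1) + 1, hk⟩ : Fin α.length) = ⟨k + d + 1 + 1, by omega⟩ :=
        Fin.ext (by simp; omega)
      rw [e]
      exact lt_trans (ihd k h1) (hd (k + d + 1) (by omega))
  have hsm : StrictMono σ := by
    intro i j hij
    have hij' : (i : ℕ) < j := hij
    obtain ⟨d, hd'⟩ : ∃ d, (j : ℕ) = (i : ℕ) + d + 1 := ⟨(j : ℕ) - i - 1, by omega⟩
    have hj : j = ⟨(i : ℕ) + d + 1, by omega⟩ := Fin.ext hd'
    have := mono d (i : ℕ) (by omega)
    have ei : (⟨(i : ℕ), by omega⟩ : Fin α.length) = i := Fin.ext rfl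
    rw [ei] at this
    rw [hj]
    exact this
  haveI : WellFoundedLT (Fin α.length) := Finite.to_wellFoundedLT
  have hid : ⇑σ = id := by
    have h := (hsm.range_inj strictMono_id).mp
    rw [σ.surjective.range_eq, Set.range_id] at h
    exact h rfl
  have : (fun i => α.get (σ i)) = α.get := by rw [hid]; rfl
  rw [this, List.ofFn_get]

lemma part1 {A : Type*} (I : A → A → Prop) (α : List A) :
    ∀ (N : ℕ) (σ : Fin α.length ≃ Fin α.length),
      (∀ i j, TransGen (depL I α) i j → σ.symm i < σ.symm j) →
      (Finset.univ.filter (fun pr : Fin α.length × Fin α.length =>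
          pr.1 < pr.2 ∧ σ pr.2 < σ pr.1)).card ≤ N →
      ReflTransGen (SwapRel I) α (List.ofFn fun i => α.get (σ i)) := by
  intro N
  induction N with
  | zero =>
    intro σ hσ hcard
    have hd : ∀ (t : ℕ) (ht : t + 1 < α.length), σ ⟨t, by omega⟩ < σ ⟨t+1, ht⟩ := by
      intro t ht
      by_contra hle
      have hne : σ ⟨t+1, ht⟩ ≠ σ ⟨t, by omega⟩ := by
        intro h
        have := σ.injective h
        simp [Fin.ext_iff] at this
      have hlt : σ ⟨t+1, ht⟩ < σ ⟨t, by omega⟩ := lt_of_le_of_ne (not_lt.mp hle) hne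
      have hmem : (⟨⟨t, by omega⟩, ⟨t+1, ht⟩⟩ : Fin α.length × Fin α.length) ∈
          Finset.univ.filter (fun pr : Fin α.length × Fin α.length =>
            pr.1 < pr.2 ∧ σ pr.2 < σ pr.1) := by
        simp only [Finset.mem_filter, Finset.mem_univ, true_and]
        exact ⟨by simp [Fin.lt_def], hlt⟩
      have := Finset.card_pos.mpr ⟨_, hmem⟩
      omega
    rw [no_descent_id α σ hd]
  | succ N ih =>
    intro σ hσ hcard
    by_cases hdes : ∃ (t : ℕ) (ht : t + 1 < α.length), σ ⟨t+1, ht⟩ < σ ⟨t, by omega⟩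
    · obtain ⟨t, ht, hlt⟩ := hdes
      set p0 : Fin α.length := ⟨t, by omega⟩ with hp0
      set p1 : Fin α.length := ⟨t+1, ht⟩ with hp1
      set s := Equiv.swap p0 p1 with hs
      have sval : ∀ x : Fin α.length, ((s x : Fin α.length) : ℕ) =
          if (x : ℕ) = t then t+1 else if (x : ℕ) = t+1 then t else (x : ℕ) := by
        intro x
        rcases eq_or_ne x p0 with rfl | h0
        · rw [hs, Equiv.swap_apply_left]
          simp [hp0, hp1]
        · rcases eq_or_ne x p1 with rfl | h1
          · rw [hs, Equiv.swap_apply_right]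
            rw [if_neg (by first | (simp [hp1]; omega) | simp [hp1]),
              if_pos (by first | (simp [hp1]; omega) | simp [hp1])]
          · rw [hs, Equiv.swap_apply_of_ne_of_ne h0 h1,
              if_neg (fun h => h0 (Fin.ext h)), if_neg (fun h => h1 (Fin.ext h))]
      have hdep_lt : ∀ i j, TransGen (depL I α) i j → i < j := by
        intro i j h
        induction h with
        | single h => exact h.1
        | tail _ hbc ihh => exact ihh.trans hbc.1
      have hI : I (α.get (σ p1)) (α.get (σ p0)) := by
        by_contra hni
        have := hσ _ _ (TransGen.single (⟨hlt, hni⟩ : depL I α (σ p1) (σ p0)))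
        simp only [Equiv.symm_apply_apply] at this
        rw [Fin.lt_def] at this
        simp [hp0, hp1] at this
      set σ' := s.trans σ with hσ'def
      have hσ'symm : ∀ i, σ'.symm i = s (σ.symm i) := by
        intro i
        rw [hσ'def, Equiv.symm_trans_apply, Equiv.symm_swap]
      have hσ' : ∀ i j, TransGen (depL I α) i j → σ'.symm i < σ'.symm j := by
        intro i j h
        have hij : (i : ℕ) < (j : ℕ) := hdep_lt i j h
        have h2 : ((σ.symm i : Fin α.length) : ℕ) < ((σ.symm j : Fin α.length) : ℕ) :=
          hσ i j h
        have hexcl : ¬ (((σ.symm i : Fin α.length) : ℕ) = t ∧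
            ((σ.symm j : Fin α.length) : ℕ) = t+1) := by
          rintro ⟨ha, hb⟩
          have e1 : σ.symm i = p0 := Fin.ext ha
          have e2 : σ.symm j = p1 := Fin.ext hb
          have hi2 : i = σ p0 := by rw [← e1, Equiv.apply_symm_apply]
          have hj2 : j = σ p1 := by rw [← e2, Equiv.apply_symm_apply]
          rw [Fin.lt_def] at hlt
          have hi3 : (i : ℕ) = ((σ p0 : Fin α.length) : ℕ) := by rw [hi2]
          have hj3 : (j : ℕ) = ((σ p1 : Fin α.length) : ℕ) := by rw [hj2]
          omega
        rw [Fin.lt_def, hσ'symm, hσ'symm, sval, sval]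
        split_ifs <;> omega
      have hInv : (Finset.univ.filter (fun pr : Fin α.length × Fin α.length =>
            pr.1 < pr.2 ∧ σ' pr.2 < σ' pr.1)).card <
          (Finset.univ.filter (fun pr : Fin α.length × Fin α.length =>
            pr.1 < pr.2 ∧ σ pr.2 < σ pr.1)).card := by
        have hinj : Function.Injective
            (fun pr : Fin α.length × Fin α.length => (s pr.1, s pr.2)) := by
          rintro ⟨x1, y1⟩ ⟨x2, y2⟩ h
          simp only [Prod.mk.injEq] at h
          exact Prod.ext (s.injective h.1) (s.injective h.2)
        have hsub : (Finset.univ.filter (fun pr : Fin α.length × Fin α.length =>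
              pr.1 < pr.2 ∧ σ' pr.2 < σ' pr.1)).image
              (fun pr => (s pr.1, s pr.2)) ⊆
            Finset.univ.filter (fun pr : Fin α.length × Fin α.length =>
              pr.1 < pr.2 ∧ σ pr.2 < σ pr.1) := by
          intro q hq
          simp only [Finset.mem_image] at hq
          obtain ⟨⟨x, y⟩, hm, rfl⟩ := hq
          simp only [Finset.mem_filter, Finset.mem_univ, true_and] at hm ⊢
          obtain ⟨hxy, hlt2⟩ := hm
          constructor
          · have hexcl : ¬ (((x : Fin α.length) : ℕ) = t ∧
                ((y : Fin α.length) : ℕ) = t+1) := by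
              rintro ⟨ha, hb⟩
              have e1 : x = p0 := Fin.ext ha
              have e2 : y = p1 := Fin.ext hb
              subst e1; subst e2
              have hv1 : σ' p1 = σ p0 := by
                rw [hσ'def, Equiv.trans_apply, hs, Equiv.swap_apply_right]
              have hv2 : σ' p0 = σ p1 := by
                rw [hσ'def, Equiv.trans_apply, hs, Equiv.swap_apply_left]
              rw [hv1, hv2] at hlt2
              exact absurd hlt2 (not_lt.mpr hlt.le)
            rw [Fin.lt_def, sval, sval]
            rw [Fin.lt_def] at hxy
            split_ifs <;> omega
          · exact hlt2
        have hmem : (p0, p1) ∈ Finset.univ.filter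
            (fun pr : Fin α.length × Fin α.length =>
              pr.1 < pr.2 ∧ σ pr.2 < σ pr.1) := by
          simp only [Finset.mem_filter, Finset.mem_univ, true_and]
          exact ⟨by rw [Fin.lt_def]; simp [hp0, hp1], hlt⟩
        have hnot : (p0, p1) ∉ (Finset.univ.filter
            (fun pr : Fin α.length × Fin α.length =>
              pr.1 < pr.2 ∧ σ' pr.2 < σ' pr.1)).image (fun pr => (s pr.1, s pr.2)) := by
          intro hq
          simp only [Finset.mem_image] at hq
          obtain ⟨⟨x, y⟩, hm, heq⟩ := hq
          simp only [Prod.mk.injEq] at heq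
          have hx : x = p1 := by
            have := congrArg s heq.1
            rwa [Equiv.swap_apply_self, hs, Equiv.swap_apply_left] at this
          have hy : y = p0 := by
            have := congrArg s heq.2
            rwa [Equiv.swap_apply_self, hs, Equiv.swap_apply_right] at this
          simp only [Finset.mem_filter, Finset.mem_univ, true_and] at hm
          rw [hx, hy, Fin.lt_def] at hm
          simp [hp0, hp1] at hm
        calc (Finset.univ.filter (fun pr : Fin α.length × Fin α.length =>
                pr.1 < pr.2 ∧ σ' pr.2 < σ' pr.1)).card
            = ((Finset.univ.filter (fun pr : Fin α.length × Fin α.length =>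
                pr.1 < pr.2 ∧ σ' pr.2 < σ' pr.1)).image
                (fun pr => (s pr.1, s pr.2))).card :=
              (Finset.card_image_of_injective _ hinj).symm
          _ < _ := Finset.card_lt_card ⟨hsub, fun hc => hnot (hc hmem)⟩
      have hrec := ih σ' hσ' (by omega)
      refine hrec.tail ?_
      exact swapRel_ofFn (I := I) (fun i => α.get (σ i)) t ht hI
    · push_neg at hdes
      have hd : ∀ (t : ℕ) (ht : t + 1 < α.length), σ ⟨t, by omega⟩ < σ ⟨t+1, ht⟩ := by
        intro t ht
        have hne : σ ⟨t, by omega⟩ ≠ σ ⟨t+1, ht⟩ := by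
          intro h
          have := σ.injective h
          simp [Fin.ext_iff] at this
        exact lt_of_le_of_ne (hdes t ht) hne
      rw [no_descent_id α σ hd]

lemma transGen_congr_fwd {X Y : Type*} {r : X → X → Prop} {s : Y → Y → Prop}
    (e : X → Y) (h : ∀ i j, r i j → s (e i) (e j)) :
    ∀ i j, TransGen r i j → TransGen s (e i) (e j) := by
  intro i j hij
  induction hij with
  | single h1 => exact TransGen.single (h _ _ h1)
  | tail _ h1 ih => exact ih.tail (h _ _ h1)

lemma transGen_congr {X Y : Type*} {r : X → X → Prop} {s : Y → Y → Prop}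
    (e : X ≃ Y) (h : ∀ i j, r i j ↔ s (e i) (e j)) :
    ∀ i j, TransGen r i j ↔ TransGen s (e i) (e j) := by
  intro i j
  constructor
  · exact transGen_congr_fwd e (fun i j => (h i j).mp) i j
  · intro hij
    have h' : ∀ i j, s i j → r (e.symm i) (e.symm j) := by
      intro i j hij2
      have := (h (e.symm i) (e.symm j)).mpr
      rw [e.apply_symm_apply, e.apply_symm_apply] at this
      exact this hij2
    have := transGen_congr_fwd e.symm h' _ _ hij
    simpa using this

lemma step2 {A : Type*} {I : A → A → Prop} (hsymm : ∀ a b, I a b → I b a)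
    {α β : List A} (h : SwapRel I α β) :
    ∃ e : Fin α.length ≃ Fin β.length, (∀ i, β.get (e i) = α.get i) ∧
      (∀ i j, depL I α i j ↔ depL I β (e i) (e j)) := by
  obtain ⟨u, a, b, w, hI, rfl, rfl⟩ := h
  have hlen : (u ++ a :: b :: w).length = (u ++ b :: a :: w).length := by simp
  have hp1 : u.length + 1 < (u ++ a :: b :: w).length := by simp
  have hp0 : u.length < (u ++ a :: b :: w).length := by simp
  set p0 : Fin (u ++ a :: b :: w).length := ⟨u.length, hp0⟩ with hp0d
  set p1 : Fin (u ++ a :: b :: w).length := ⟨u.length + 1, hp1⟩ with hp1d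
  set e : Fin (u ++ a :: b :: w).length ≃ Fin (u ++ b :: a :: w).length :=
    (Equiv.swap p0 p1).trans (finCongr hlen) with hed
  have eval : ∀ i : Fin (u ++ a :: b :: w).length, ((e i : Fin (u ++ b :: a :: w).length) : ℕ) =
      if (i : ℕ) = u.length then u.length + 1
      else if (i : ℕ) = u.length + 1 then u.length else (i : ℕ) := by
    intro x
    rw [hed, Equiv.trans_apply, finCongr_apply, Fin.coe_cast]
    rcases eq_or_ne x p0 with rfl | h0
    · rw [Equiv.swap_apply_left]
      simp [hp0d, hp1d]
    · rcases eq_or_ne x p1 with rfl | h1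
      · rw [Equiv.swap_apply_right]
        rw [if_neg (by first | (simp [hp1d]; omega) | simp [hp1d]),
          if_pos (by first | (simp [hp1d]; omega) | simp [hp1d])]
      · rw [Equiv.swap_apply_of_ne_of_ne h0 h1,
          if_neg (fun h => h0 (Fin.ext h)), if_neg (fun h => h1 (Fin.ext h))]
  have g1 : ∀ (x y : A) (v : ℕ) (hv : v < u.length),
      (u ++ x :: y :: w)[v]'(by simp; omega) = u[v] := by
    intro x y v hv
    rw [List.getElem_append_left hv]
  have g2 : ∀ (x y : A), (u ++ x :: y :: w)[u.length]'(by simp) = x := by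
    intro x y
    rw [List.getElem_append_right (le_refl _)]
    simp
  have g3 : ∀ (x y : A), (u ++ x :: y :: w)[u.length + 1]'(by simp) = y := by
    intro x y
    rw [List.getElem_append_right (by omega)]
    have : u.length + 1 - u.length = 1 := by omega
    simp [this]
  have g4 : ∀ (x y : A) (v : ℕ) (hv : v < (u ++ x :: y :: w).length)
      (hv2 : u.length + 2 ≤ v), (u ++ x :: y :: w)[v] = w[v - u.length - 2]'(by simp at hv; omega) := by
    intro x y v hv hv2
    rw [List.getElem_append_right (by omega)]
    obtain ⟨k, hk⟩ : ∃ k, v - u.length = k + 2 := ⟨v - u.length - 2, by omega⟩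
    simp only [hk, List.getElem_cons_succ]
    rfl
  have hget : ∀ i, (u ++ b :: a :: w).get (e i) = (u ++ a :: b :: w).get i := by
    intro i
    simp only [List.get_eq_getElem]
    have hiv := i.isLt
    rcases lt_trichotomy (i : ℕ) u.length with hc | hc | hc
    · have hev : e i = ⟨(i : ℕ), by simp at hiv ⊢; omega⟩ :=
        Fin.ext (by rw [eval]; rw [if_neg (by omega), if_neg (by omega)])
      rw [hev]
      simp only []
      rw [g1 b a (i : ℕ) hc, g1 a b (i : ℕ) hc]
    · have hev : e i = ⟨u.length + 1, by simp⟩ :=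
        Fin.ext (by rw [eval]; simp [hc])
      rw [hev]
      have h1 := g3 b a
      have h2 := g2 a b
      simp only []
      rw [h1]
      have : (u ++ a :: b :: w)[(i : ℕ)]'i.isLt = (u ++ a :: b :: w)[u.length]'(by simp) := by
        congr 1
      rw [this, h2]
    · rcases eq_or_lt_of_le (Nat.succ_le_of_lt hc) with hc2 | hc2
      · have hev : e i = ⟨u.length, by simp⟩ :=
          Fin.ext (by rw [eval]; rw [if_neg (by omega), if_pos (by omega)])
        rw [hev]
        simp only []
        rw [g2 b a]
        have : (u ++ a :: b :: w)[(i : ℕ)]'i.isLt = (u ++ a :: b :: w)[u.length + 1]'(by simp) := by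
          congr 1
          omega
        rw [this, g3 a b]
      · have hev : e i = ⟨(i : ℕ), by simp at hiv ⊢; omega⟩ :=
          Fin.ext (by rw [eval]; rw [if_neg (by omega), if_neg (by omega)])
        rw [hev]
        simp only []
        rw [g4 b a (i : ℕ) (by simp at hiv ⊢; omega) (by omega),
          g4 a b (i : ℕ) (by simp at hiv ⊢; omega) (by omega)]
  refine ⟨e, hget, ?_⟩
  intro i j
  unfold depL
  rw [hget i, hget j]
  by_cases hX : I ((u ++ a :: b :: w).get i) ((u ++ a :: b :: w).get j)
  · constructor
    · rintro ⟨-, hn⟩; exact absurd hX hn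
    · rintro ⟨-, hn⟩; exact absurd hX hn
  · have hgeta : (u ++ a :: b :: w).get p0 = a := by
      simp only [List.get_eq_getElem]
      exact g2 a b
    have hgetb : (u ++ a :: b :: w).get p1 = b := by
      simp only [List.get_eq_getElem]
      exact g3 a b
    have hexcl1 : ¬ ((i : ℕ) = u.length ∧ (j : ℕ) = u.length + 1) := by
      rintro ⟨h1, h2⟩
      have e1 : i = p0 := Fin.ext h1
      have e2 : j = p1 := Fin.ext h2
      rw [e1, e2, hgeta, hgetb] at hX
      exact hX hI
    have hexcl2 : ¬ ((i : ℕ) = u.length + 1 ∧ (j : ℕ) = u.length) := by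
      rintro ⟨h1, h2⟩
      have e1 : i = p1 := Fin.ext h1
      have e2 : j = p0 := Fin.ext h2
      rw [e1, e2, hgeta, hgetb] at hX
      exact hX (hsymm _ _ hI)
    have hord : (i < j) ↔ (e i < e j) := by
      rw [Fin.lt_def, Fin.lt_def, eval, eval]
      split_ifs <;> omega
    constructor
    · rintro ⟨h1, h2⟩; exact ⟨hord.mp h1, h2⟩
    · rintro ⟨h1, h2⟩; exact ⟨hord.mpr h1, h2⟩


open Relation in
lemma part2 {A : Type*} {I : A → A → Prop} (hsymm : ∀ a b, I a b → I b a) (α : List A) :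
    ∀ β, ReflTransGen (SwapRel I) α β →
      ∃ e : Fin α.length ≃ Fin β.length, (∀ i, β.get (e i) = α.get i) ∧
        (∀ i j, TransGen (depL I α) i j ↔ TransGen (depL I β) (e i) (e j)) := by
  intro β h
  induction h with
  | refl => exact ⟨Equiv.refl _, fun i => rfl, fun i j => Iff.rfl⟩
  | tail hab hbc ih =>
    obtain ⟨e1, hg1, ht1⟩ := ih
    obtain ⟨e2, hg2, hd2⟩ := step2 hsymm hbc
    refine ⟨e1.trans e2, fun i => ?_, fun i j => ?_⟩
    · rw [Equiv.trans_apply, hg2, hg1]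
    · rw [ht1 i j, Equiv.trans_apply, Equiv.trans_apply]
      exact transGen_congr e2 hd2 (e1 i) (e1 j)

/-- Every linearization of the partial order `po_I(α)` (the word read along any
topological ordering of the dependence DAG) belongs to the trace `[α]_I`; and
consequently any two strings related by a sequence of swaps of adjacent independent
letters induce isomorphic labeled partial orders. -/
theorem stmt14 {A : Type*} (I : A → A → Prop)
    (hsymm : ∀ a b, I a b → I b a) (hirr : ∀ a, ¬ I a a)
    (α : List A) :
    (∀ σ : Fin α.length ≃ Fin α.length,
      (∀ i j, Relation.TransGen (depL I α) i j → σ.symm i < σ.symm j) →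
      Relation.ReflTransGen (SwapRel I) α (List.ofFn fun i => α.get (σ i))) ∧
    (∀ β : List A, Relation.ReflTransGen (SwapRel I) α β →
      ∃ e : Fin α.length ≃ Fin β.length,
        (∀ i, β.get (e i) = α.get i) ∧
        (∀ i j, Relation.TransGen (depL I α) i j ↔
          Relation.TransGen (depL I β) (e i) (e j))) := by
  constructor
  · intro σ hσ
    exact part1 I α _ σ hσ le_rfl
  · exact part2 hsymm α
end
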